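/- For p a power of two and all blocks equal, m_i = b for all i, the recurrence C[i,i]=0, C[i,j]=min_k[max(C[i,k],C[k+1,j]) + α + β·min(S[i,k],S[k+1,j])] satisfies C[0,p−1] = (log₂ p)·α + β·(p−1)·b. -/

import Mathlib

open Finset

/-- Sum of block sizes over the consecutive processor range `[i, k]`. -/
noncomputable def segSum (m : ℕ → ℝ) (i k : ℕ) : ℝ := ∑ t ∈ Finset.Icc i k, m t

/-- Homogeneous ordered-tree dynamic programming table (`γ = 0`):
`C[i,i] = 0` and, for `i < j`,
`C[i,j] = min_{i ≤ k < j} [max(C[i,k], C[k+1,j]) + α + β * min(S[i,k], S[k+1,j])]`. -/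
noncomputable def dpC (m : ℕ → ℝ) (α β : ℝ) : ℕ → ℕ → ℝ
  | i, j =>
    if h : j ≤ i then 0
    else
      ((Finset.Ico i j).attach.inf'
        (Finset.attach_nonempty_iff.mpr (by rw [Finset.nonempty_Ico]; omega)))
        fun k =>
          have hk := Finset.mem_Ico.mp k.2
          max (dpC m α β i k.1) (dpC m α β (k.1 + 1) j) +
            (α + β * min (segSum m i k.1) (segSum m (k.1 + 1) j))
termination_by i j => j - i
decreasing_by
  · omega
  · omega

noncomputable def Fc (α β b : ℝ) (n : ℕ) : ℝ :=
  (Nat.clog 2 n : ℝ) * α + β * (((n : ℝ) - 1) * b)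

lemma segSum_const (b : ℝ) (i k : ℕ) :
    segSum (fun _ => b) i k = ((k + 1 - i : ℕ) : ℝ) * b := by
  simp [segSum, Nat.card_Icc, nsmul_eq_mul]

lemma Fc_mono {α β b : ℝ} (hb : 0 ≤ b) (hα : 0 ≤ α) (hβ : 0 ≤ β) {m n : ℕ} (h : m ≤ n) :
    Fc α β b m ≤ Fc α β b n := by
  unfold Fc
  have h1 : (Nat.clog 2 m : ℝ) ≤ (Nat.clog 2 n : ℝ) :=
    Nat.cast_le.2 (Nat.clog_mono_right _ h)
  have h2 : ((m : ℝ) - 1) ≤ ((n : ℝ) - 1) := by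
    have := (@Nat.cast_le ℝ _ _ _).2 h; linarith
  have := mul_le_mul_of_nonneg_right h2 hb
  have := mul_le_mul_of_nonneg_left this hβ
  nlinarith [mul_le_mul_of_nonneg_right h1 hα]

lemma Fc_key {α β b : ℝ} (hb : 0 ≤ b) (hα : 0 ≤ α) (hβ : 0 ≤ β) {a c : ℕ}
    (ha : 1 ≤ a) (hac : a ≤ c) :
    Fc α β b (a + c) ≤ Fc α β b c + (α + β * ((a : ℝ) * b)) := by
  have hc1 : 1 ≤ c := le_trans ha hac
  have hclog : Nat.clog 2 (a + c) ≤ Nat.clog 2 c + 1 := by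
    have h1 : a + c ≤ 2 ^ (Nat.clog 2 c + 1) := by
      have := Nat.le_pow_clog one_lt_two c
      have : a + c ≤ 2 * c := by omega
      calc a + c ≤ 2 * c := this
        _ ≤ 2 * 2 ^ (Nat.clog 2 c) := by
            have := Nat.le_pow_clog one_lt_two c; omega
        _ = 2 ^ (Nat.clog 2 c + 1) := by ring
    exact (Nat.clog_le_iff_le_pow one_lt_two).2 h1
  have hclogR : (Nat.clog 2 (a + c) : ℝ) ≤ (Nat.clog 2 c : ℝ) + 1 := by
    exact_mod_cast hclog
  unfold Fc
  have hcast : ((a + c : ℕ) : ℝ) = (a : ℝ) + (c : ℝ) := by push_cast; ring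
  rw [hcast]
  nlinarith [mul_le_mul_of_nonneg_right hclogR hα]

lemma dp_const (b α β : ℝ) (hb : 0 ≤ b) (hα : 0 ≤ α) (hβ : 0 ≤ β) :
    ∀ n, 1 ≤ n → ∀ i, dpC (fun _ => b) α β i (i + (n - 1)) = Fc α β b n := by
  intro n
  induction n using Nat.strong_induction_on with
  | _ n ih =>
    intro hn i
    rcases eq_or_lt_of_le hn with h1 | h2
    · rw [dpC]
      rw [dif_pos (by omega)]
      rw [← h1]
      simp [Fc, Nat.clog_one_right]
    · have hn2 : 2 ≤ n := h2
      have hij : i < i + (n - 1) := by omega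
      rw [dpC, dif_neg (by omega)]
      apply le_antisymm
      · -- upper bound: balanced-ish split
        set tt := Nat.clog 2 n with htt
        have ht1 : 1 ≤ tt := Nat.clog_pos one_lt_two hn2
        have hlt : 2 ^ (tt - 1) < n := Nat.pow_pred_clog_lt_self one_lt_two h2
        have hle : n ≤ 2 ^ tt := Nat.le_pow_clog one_lt_two n
        have hpow : 2 ^ tt = 2 * 2 ^ (tt - 1) := by
          rw [← pow_succ']; congr 1; omega
        set a := n - 2 ^ (tt - 1) with had
        have ha1 : 1 ≤ a := by omega
        have ha2 : a ≤ 2 ^ (tt - 1) := by omega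
        have hkmem : i + (a - 1) ∈ Finset.Ico i (i + (n - 1)) := by
          rw [Finset.mem_Ico]; omega
        refine le_trans (Finset.inf'_le _ (Finset.mem_attach _ ⟨_, hkmem⟩)) ?_
        simp only
        have e1 : dpC (fun _ => b) α β i (i + (a - 1)) = Fc α β b a :=
          ih a (by omega) (by omega) i
        have e2 : dpC (fun _ => b) α β (i + (a - 1) + 1) (i + (n - 1)) =
            Fc α β b (2 ^ (tt - 1)) := by
          have : i + (n - 1) = (i + (a - 1) + 1) + (2 ^ (tt - 1) - 1) := by omega
          rw [this]
          exact ih (2 ^ (tt - 1)) (by omega) (by omega) _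
        rw [e1, e2, segSum_const, segSum_const]
        have c1 : (i + (a - 1) + 1 - i : ℕ) = a := by omega
        have c2 : (i + (n - 1) + 1 - (i + (a - 1) + 1) : ℕ) = 2 ^ (tt - 1) := by omega
        rw [c1, c2]
        have hmin : min ((a : ℝ) * b) (((2 ^ (tt - 1) : ℕ) : ℝ) * b) = (a : ℝ) * b := by
          apply min_eq_left
          exact mul_le_mul_of_nonneg_right (Nat.cast_le.2 ha2) hb
        have hmax : max (Fc α β b a) (Fc α β b (2 ^ (tt - 1))) = Fc α β b (2 ^ (tt - 1)) :=
          max_eq_right (Fc_mono hb hα hβ ha2)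
        rw [hmin, hmax]
        unfold Fc
        rw [Nat.clog_pow 2 (tt - 1) one_lt_two]
        have ca : (a : ℝ) = (n : ℝ) - ((2 ^ (tt - 1) : ℕ) : ℝ) := by
          rw [had]; push_cast [Nat.cast_sub (le_of_lt hlt)]; ring
        have ct : ((tt - 1 : ℕ) : ℝ) = (tt : ℝ) - 1 := by
          push_cast [Nat.cast_sub ht1]; ring
        rw [ca, ct]
        ring_nf
        nlinarith [hb]
      · -- lower bound
        apply Finset.le_inf'
        rintro ⟨k, hk⟩ -
        simp only
        rw [Finset.mem_Ico] at hk
        set a := k - i + 1 with had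
        set c := i + (n - 1) - k with hcd
        have hsum : a + c = n := by omega
        have ha1 : 1 ≤ a := by omega
        have hc1 : 1 ≤ c := by omega
        have e1 : dpC (fun _ => b) α β i k = Fc α β b a := by
          have : k = i + (a - 1) := by omega
          rw [this]; exact ih a (by omega) (by omega) i
        have e2 : dpC (fun _ => b) α β (k + 1) (i + (n - 1)) = Fc α β b c := by
          have : i + (n - 1) = (k + 1) + (c - 1) := by omega
          rw [this]; exact ih c (by omega) (by omega) _
        rw [e1, e2, segSum_const, segSum_const]
        have c1 : (k + 1 - i : ℕ) = a := by omega
        have c2 : (i + (n - 1) + 1 - (k + 1) : ℕ) = c := by omega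
        rw [c1, c2]
        rcases le_total a c with hac | hca
        · have hmin : min ((a : ℝ) * b) ((c : ℝ) * b) = (a : ℝ) * b :=
            min_eq_left (mul_le_mul_of_nonneg_right (Nat.cast_le.2 hac) hb)
          rw [hmin]
          calc Fc α β b n = Fc α β b (a + c) := by rw [hsum]
            _ ≤ Fc α β b c + (α + β * ((a : ℝ) * b)) := Fc_key hb hα hβ ha1 hac
            _ ≤ max (Fc α β b a) (Fc α β b c) + (α + β * ((a : ℝ) * b)) := by
                gcongr; exact le_max_right _ _
        · have hmin : min ((a : ℝ) * b) ((c : ℝ) * b) = (c : ℝ) * b :=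
            min_eq_right (mul_le_mul_of_nonneg_right (Nat.cast_le.2 hca) hb)
          rw [hmin]
          calc Fc α β b n = Fc α β b (c + a) := by rw [Nat.add_comm c a, hsum]
            _ ≤ Fc α β b a + (α + β * ((c : ℝ) * b)) := Fc_key hb hα hβ hc1 hca
            _ ≤ max (Fc α β b a) (Fc α β b c) + (α + β * ((c : ℝ) * b)) := by
                gcongr; exact le_max_left _ _

/-- Sanity check for the regular problem: for `p = 2^t` equal blocks of size `b`,
`C[0, p-1] = t * α + β * (2^t - 1) * b`. -/
theorem stmt_19 (t : ℕ) (b : ℝ) (hb : 0 ≤ b) (α β : ℝ) (hα : 0 ≤ α) (hβ : 0 ≤ β) :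
    dpC (fun _ => b) α β 0 (2 ^ t - 1) =
      (t : ℝ) * α + β * (((2 ^ t - 1 : ℕ) : ℝ) * b) := by
  have h := dp_const b α β hb hα hβ (2 ^ t) (Nat.one_le_two_pow) 0
  rw [Nat.zero_add] at h
  rw [h]
  unfold Fc
  rw [Nat.clog_pow 2 t one_lt_two]
  congr 1
  rw [Nat.cast_sub Nat.one_le_two_pow]
  push_cast
  ring
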